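/- Let p be a prime, m and n positive integers with m < n. Define S_n^{(m)}(p) as the sum of 1/(l_1⋯l_n) over n-tuples of positive integers with l_1+⋯+l_n = mp, each l_i < p and coprime to p; and R_n^{(m)}(p) as the same sum but only requiring each l_i coprime to p (no upper bound). Then S_n^{(m)}(p) ≡ Σ_{k=0}^{m-1} C(n,k)·(-1)^k·R_n^{(m-k)}(p) (mod p). -/

import Mathlib

/-- `x ≡ y (mod p^r)` as p-integral rationals. -/
def ratCong (p r : ℕ) (x y : ℚ) : Prop :=
  ∃ z : ℚ, x - y = (p : ℚ) ^ r * z ∧ ¬ (p ∣ z.den)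

/-- `R_n^{(m)}(p)`-type sum: positive `n`-tuples summing to `N`, each coprime to `p`. -/
def hsum (p n N : ℕ) : ℚ :=
  ∑ l ∈ (Fintype.piFinset fun _ : Fin n => Finset.Icc 1 N) |>.filter
      (fun l => ∑ i, l i = N ∧ ∀ i, ¬ p ∣ l i),
    ∏ i, (1 : ℚ) / l i

/-- `S_n^{(m)}(p)`-type sum: additionally each `lᵢ < p`. -/
def hsumLtCop (p n N : ℕ) : ℚ :=
  ∑ l ∈ (Fintype.piFinset fun _ : Fin n => Finset.Ico 1 p) |>.filter
      (fun l => ∑ i, l i = N ∧ ∀ i, ¬ p ∣ l i),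
    ∏ i, (1 : ℚ) / l i



variable {p : ℕ}

/-- p-integral -/
def PInt (p : ℕ) (x : ℚ) : Prop := ¬ (p ∣ x.den)

lemma pint_of_den_dvd (hp : p.Prime) {x : ℚ} {c : ℕ} (h : x.den ∣ c) (hc : ¬ p ∣ c) :
    PInt p x := fun hd => hc (hd.trans h)

lemma pint_intCast (hp : p.Prime) (z : ℤ) : PInt p (z : ℚ) := by
  simp [PInt, Rat.den_intCast, Nat.Prime.one_lt hp, Nat.dvd_one, Nat.Prime.ne_one hp]

lemma pint_zero (hp : p.Prime) : PInt p 0 := by simpa using pint_intCast hp 0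

lemma pint_one (hp : p.Prime) : PInt p 1 := by simpa using pint_intCast hp 1

lemma pint_add (hp : p.Prime) {x y : ℚ} (hx : PInt p x) (hy : PInt p y) : PInt p (x + y) := by
  intro h
  rcases (Nat.Prime.dvd_mul hp).1 (h.trans (Rat.add_den_dvd x y)) with h | h
  exacts [hx h, hy h]

lemma pint_mul (hp : p.Prime) {x y : ℚ} (hx : PInt p x) (hy : PInt p y) : PInt p (x * y) := by
  intro h
  rcases (Nat.Prime.dvd_mul hp).1 (h.trans (Rat.mul_den_dvd x y)) with h | h
  exacts [hx h, hy h]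

lemma pint_inv_nat (hp : p.Prime) {a : ℕ} (ha : 0 < a) (hpa : ¬ p ∣ a) :
    PInt p (1 / (a : ℚ)) := by
  apply pint_of_den_dvd hp _ hpa
  have : (1 / (a : ℚ)) = ((1 : ℤ) : ℚ) / ((a : ℤ) : ℚ) := by push_cast; ring
  rw [this, ← Rat.divInt_eq_div]
  exact_mod_cast Rat.den_dvd 1 a

/-- Strong congruence: both sides p-integral, difference p times a p-integral. -/
def PC (p : ℕ) (x y : ℚ) : Prop :=
  PInt p x ∧ PInt p y ∧ ∃ z : ℚ, x - y = p * z ∧ PInt p z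

lemma PC_refl (hp : p.Prime) {x : ℚ} (hx : PInt p x) : PC p x x :=
  ⟨hx, hx, 0, by simp, pint_zero hp⟩

lemma PC_add (hp : p.Prime) {x y u v : ℚ} (h1 : PC p x y) (h2 : PC p u v) :
    PC p (x + u) (y + v) := by
  obtain ⟨hx, hy, z, hz, hzint⟩ := h1
  obtain ⟨hu, hv, w, hw, hwint⟩ := h2
  exact ⟨pint_add hp hx hu, pint_add hp hy hv, z + w, by rw [mul_add, ← hz, ← hw]; ring,
    pint_add hp hzint hwint⟩

lemma PC_mul (hp : p.Prime) {x y u v : ℚ} (h1 : PC p x y) (h2 : PC p u v) :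
    PC p (x * u) (y * v) := by
  obtain ⟨hx, hy, z, hz, hzint⟩ := h1
  obtain ⟨hu, hv, w, hw, hwint⟩ := h2
  refine ⟨pint_mul hp hx hu, pint_mul hp hy hv, x * w + v * z, ?_,
    pint_add hp (pint_mul hp hx hwint) (pint_mul hp hv hzint)⟩
  have : x * u - y * v = x * (u - v) + v * (x - y) := by ring
  rw [this, hz, hw]; ring

lemma PC_sum (hp : p.Prime) {ι : Type*} (s : Finset ι) (f g : ι → ℚ)
    (h : ∀ i ∈ s, PC p (f i) (g i)) :
    PC p (∑ i ∈ s, f i) (∑ i ∈ s, g i) := by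
  classical
  induction s using Finset.induction_on with
  | empty => simpa using PC_refl hp (pint_zero hp)
  | @insert a s hi ih =>
    rw [Finset.sum_insert hi, Finset.sum_insert hi]
    exact PC_add hp (h a (Finset.mem_insert_self a s))
      (ih fun i his => h i (Finset.mem_insert_of_mem his))

lemma PC_prod (hp : p.Prime) {ι : Type*} (s : Finset ι) (f g : ι → ℚ)
    (h : ∀ i ∈ s, PC p (f i) (g i)) :
    PC p (∏ i ∈ s, f i) (∏ i ∈ s, g i) := by
  classical
  induction s using Finset.induction_on with
  | empty => simpa using PC_refl hp (pint_one hp)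
  | @insert a s hi ih =>
    rw [Finset.prod_insert hi, Finset.prod_insert hi]
    exact PC_mul hp (h a (Finset.mem_insert_self a s))
      (ih fun i his => h i (Finset.mem_insert_of_mem his))

/-- base congruence : `1/(a+p) ≡ 1/a (mod p)` for `p ∤ a`, `a > 0`. -/
lemma PC_inv_add (hp : p.Prime) {a : ℕ} (ha : 0 < a) (hpa : ¬ p ∣ a) :
    PC p (1 / ((a + p : ℕ) : ℚ)) (1 / (a : ℚ)) := by
  have hppos : 0 < p := hp.pos
  have hpap : ¬ p ∣ (a + p) := by
    intro h; exact hpa ((Nat.dvd_add_right (dvd_refl p)).mp (by rwa [Nat.add_comm] at h))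
  refine ⟨pint_inv_nat hp (by omega) hpap, pint_inv_nat hp ha hpa,
    -(1 / ((a : ℚ) * (a + p : ℕ))), ?_, ?_⟩
  · have h1 : ((a : ℚ)) ≠ 0 := by positivity
    have h2 : (((a + p : ℕ)) : ℚ) ≠ 0 := by positivity
    have h3 : (a : ℚ) * ((a + p : ℕ) : ℚ) ≠ 0 := by positivity
    field_simp
    push_cast
    try ring
    try tauto
  · rw [show -(1 / ((a : ℚ) * ((a + p : ℕ) : ℚ)))
        = ((-1 : ℤ) : ℚ) * (1 / (a : ℚ) * (1 / ((a + p : ℕ) : ℚ))) by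
          rw [one_div_mul_eq_div, div_div]; push_cast; ring]
    exact pint_mul hp (pint_intCast hp (-1))
      (pint_mul hp (pint_inv_nat hp ha hpa) (pint_inv_nat hp (by omega) hpap))


def RS (p n N : ℕ) : Finset (Fin n → ℕ) :=
  (Fintype.piFinset fun _ : Fin n => Finset.Icc 1 N) |>.filter
      (fun l => ∑ i, l i = N ∧ ∀ i, ¬ p ∣ l i)

def ww (n : ℕ) (l : Fin n → ℕ) : ℚ := ∏ i, (1 : ℚ) / l i

lemma hsum_eq (p n N : ℕ) : hsum p n N = ∑ l ∈ RS p n N, ww n l := rfl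

lemma mem_RS {n N : ℕ} {l : Fin n → ℕ} :
    l ∈ RS p n N ↔ (∀ i, 1 ≤ l i) ∧ (∑ i, l i = N) ∧ (∀ i, ¬ p ∣ l i) := by
  simp only [RS, Finset.mem_filter, Fintype.mem_piFinset, Finset.mem_Icc]
  constructor
  · rintro ⟨h1, h2, h3⟩
    exact ⟨fun i => (h1 i).1, h2, h3⟩
  · rintro ⟨h1, h2, h3⟩
    refine ⟨fun i => ⟨h1 i, ?_⟩, h2, h3⟩
    rw [← h2]
    exact Finset.single_le_sum (fun j _ => Nat.zero_le _) (Finset.mem_univ i)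

lemma SltC_eq (p m n : ℕ) (hm : 1 ≤ m) (hp : 0 < p) :
    hsumLtCop p n (m * p)
      = ∑ l ∈ (RS p n (m * p)).filter (fun l => ∀ i, l i < p), ww n l := by
  unfold hsumLtCop
  apply Finset.sum_congr _ (fun _ _ => rfl)
  ext l
  simp only [Finset.mem_filter, Fintype.mem_piFinset, Finset.mem_Ico, mem_RS]
  constructor
  · rintro ⟨h1, h2, h3⟩
    exact ⟨⟨fun i => (h1 i).1, h2, h3⟩, fun i => (h1 i).2⟩
  · rintro ⟨⟨h1, h2, h3⟩, h4⟩
    exact ⟨fun i => ⟨h1 i, h4 i⟩, h2, h3⟩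

lemma indicator_eq {n : ℕ} (hp : p.Prime) {l : Fin n → ℕ} (hcop : ∀ i, ¬ p ∣ l i) (x : ℚ) :
    (if (∀ i, l i < p) then x else 0)
      = ∑ T ∈ (Finset.univ : Finset (Fin n)).powerset,
          (if ∀ i ∈ T, p < l i then (-1 : ℚ) ^ T.card * x else 0) := by
  classical
  set B : Finset (Fin n) := Finset.univ.filter (fun i => p < l i) with hB
  have h2 : (Finset.univ : Finset (Fin n)).powerset.filter (fun T => ∀ i ∈ T, p < l i)
      = B.powerset := by
    ext T
    simp [hB, Finset.mem_powerset, Finset.subset_iff]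
  rw [← Finset.sum_filter, h2, ← Finset.sum_mul]
  have h3 : (∑ T ∈ B.powerset, (-1 : ℚ) ^ T.card)
      = ((∑ T ∈ B.powerset, (-1 : ℤ) ^ T.card : ℤ) : ℚ) := by push_cast; rfl
  rw [h3, Finset.sum_powerset_neg_one_pow_card]
  have h4 : B = ∅ ↔ ∀ i, l i < p := by
    rw [Finset.filter_eq_empty_iff]
    constructor
    · intro h i
      have h5 : ¬ p < l i := by simpa using h (Finset.mem_univ i)
      have hne : l i ≠ p := fun he => hcop i (he ▸ dvd_refl p)
      omega
    · intro h i _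
      have := h i
      omega
  split_ifs with hc1 hc2 hc2
  · norm_num
  · exact absurd (h4.mpr hc1) hc2
  · exact absurd (h4.mp hc2) hc1
  · norm_num

lemma sum_indic {n : ℕ} (T : Finset (Fin n)) (c : ℕ) :
    ∑ i : Fin n, (if i ∈ T then c else 0) = T.card * c := by
  rw [Finset.sum_ite_mem, Finset.univ_inter, Finset.sum_const, smul_eq_mul]

lemma GT_cong {m n : ℕ} (hp : p.Prime) (T : Finset (Fin n)) (hk : T.card < m) :
    PC p (∑ l ∈ (RS p n (m * p)).filter (fun l => ∀ i ∈ T, p < l i), ww n l)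
      (hsum p n ((m - T.card) * p)) := by
  classical
  set k := T.card with hkdef
  rw [hsum_eq]
  have hmk : (m - k) * p + k * p = m * p := by
    rw [← Nat.add_mul]; congr 1; omega
  have hre : ∑ l ∈ (RS p n (m * p)).filter (fun l => ∀ i ∈ T, p < l i), ww n l
      = ∑ l' ∈ RS p n ((m - k) * p), ww n (fun i => l' i + if i ∈ T then p else 0) := by
    apply Finset.sum_nbij' (i := fun l => fun i => l i - (if i ∈ T then p else 0))
      (j := fun l' => fun i => l' i + (if i ∈ T then p else 0))
    · -- maps into RS
      intro l hl
      rw [Finset.mem_filter, mem_RS] at hl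
      obtain ⟨⟨h1, h2, h3⟩, h4⟩ := hl
      have hge : ∀ i, (if i ∈ T then p else 0) ≤ l i := by
        intro i
        split_ifs with hi
        · exact le_of_lt (h4 i hi)
        · exact Nat.zero_le _
      rw [mem_RS]
      refine ⟨?_, ?_, ?_⟩
      · intro i
        have := hge i
        have := h1 i
        split_ifs with hi
        · have := h4 i hi; omega
        · omega
      · have hsumadd : ∑ i, (l i - (if i ∈ T then p else 0)) + ∑ i : Fin n, (if i ∈ T then p else 0)
            = ∑ i, l i := by
          rw [← Finset.sum_add_distrib]
          exact Finset.sum_congr rfl fun i _ => by have := hge i; omega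
        rw [sum_indic, h2] at hsumadd
        rw [← hkdef] at hsumadd
        omega
      · intro i hd
        apply h3 i
        have := hge i
        split_ifs at hd with hi
        · have : l i - p + p = l i := by have := h4 i hi; omega
          rw [← this]
          exact Nat.dvd_add hd (dvd_refl p)
        · simpa using hd
    · -- inverse maps into filter
      intro l' hl'
      rw [mem_RS] at hl'
      obtain ⟨h1, h2, h3⟩ := hl'
      rw [Finset.mem_filter, mem_RS]
      refine ⟨⟨fun i => le_trans (h1 i) (Nat.le_add_right _ _), ?_, ?_⟩, ?_⟩
      · rw [Finset.sum_add_distrib, sum_indic, h2, ← hkdef]; exact hmk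
      · intro i hd
        apply h3 i
        split_ifs at hd with hi
        · exact (Nat.dvd_add_right (dvd_refl p)).mp (by rwa [Nat.add_comm] at hd)
        · simpa using hd
      · intro i hi
        simp only [hi, if_true]
        have := h1 i
        omega
    · intro l hl
      rw [Finset.mem_filter] at hl
      funext i
      beta_reduce
      split_ifs with hi
      · have := hl.2 i hi; omega
      · omega
    · intro l _; funext i; beta_reduce; split_ifs with hi <;> omega
    · intro l hl
      rw [Finset.mem_filter] at hl
      have hfix : (fun i => (l i - if i ∈ T then p else 0) + if i ∈ T then p else 0) = l := by
        funext i
        split_ifs with hi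
        · have := hl.2 i hi; omega
        · omega
      show ww n l = ww n (fun i => (l i - if i ∈ T then p else 0) + if i ∈ T then p else 0)
      rw [hfix]
  rw [hre]
  apply PC_sum hp
  intro l' hl'
  rw [mem_RS] at hl'
  obtain ⟨h1, h2, h3⟩ := hl'
  unfold ww
  apply PC_prod hp
  intro i _
  by_cases hi : i ∈ T
  · simp only [hi, if_true]
    exact PC_inv_add hp (h1 i) (h3 i)
  · simp only [hi, if_false, Nat.add_zero]
    exact PC_refl hp (pint_inv_nat hp (h1 i) (h3 i))

lemma GT_empty {m n : ℕ} (hm : 1 ≤ m) (T : Finset (Fin n)) (hk : m ≤ T.card) :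
    (RS p n (m * p)).filter (fun l => ∀ i ∈ T, p < l i) = ∅ := by
  rw [Finset.eq_empty_iff_forall_notMem]
  intro l hl
  rw [Finset.mem_filter, mem_RS] at hl
  obtain ⟨⟨h1, h2, h3⟩, h4⟩ := hl
  have c1 : ∑ i ∈ T, (p + 1) ≤ ∑ i ∈ T, l i :=
    Finset.sum_le_sum fun i hi => h4 i hi
  rw [Finset.sum_const, smul_eq_mul] at c1
  have c2 : ∑ i ∈ T, l i ≤ ∑ i, l i :=
    Finset.sum_le_sum_of_subset (T.subset_univ)
  have c3 : m * (p + 1) ≤ T.card * (p + 1) := Nat.mul_le_mul_right _ hk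
  rw [h2] at c2
  nlinarith [c1, c2, c3]

lemma pint_neg_one_pow (hp : p.Prime) (k : ℕ) : PInt p ((-1 : ℚ) ^ k) := by
  have : ((-1 : ℚ) ^ k) = (((-1 : ℤ) ^ k : ℤ) : ℚ) := by push_cast; ring
  rw [this]; exact pint_intCast hp _

theorem stmt_2 (p m n : ℕ) (hp : p.Prime) (hm : 1 ≤ m) (hmn : m < n) :
    ratCong p 1 (hsumLtCop p n (m * p))
      (∑ k ∈ Finset.range m, (n.choose k : ℚ) * (-1) ^ k * hsum p n ((m - k) * p)) := by
  classical
  have hppos := hp.pos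
  set A := RS p n (m * p) with hA
  have e1 : hsumLtCop p n (m * p)
      = ∑ T ∈ (Finset.univ : Finset (Fin n)).powerset,
          (-1 : ℚ) ^ T.card * ∑ l ∈ A.filter (fun l => ∀ i ∈ T, p < l i), ww n l := by
    rw [SltC_eq p m n hm hppos, Finset.sum_filter]
    have step : ∑ l ∈ A, (if (∀ i, l i < p) then ww n l else 0)
        = ∑ l ∈ A, ∑ T ∈ (Finset.univ : Finset (Fin n)).powerset,
            (if ∀ i ∈ T, p < l i then (-1 : ℚ) ^ T.card * ww n l else 0) := by
      apply Finset.sum_congr rfl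
      intro l hl
      exact indicator_eq hp (mem_RS.mp hl).2.2 _
    rw [step, Finset.sum_comm]
    apply Finset.sum_congr rfl
    intro T _
    rw [← Finset.sum_filter, Finset.mul_sum]
  rw [e1]
  have hcardu : (Finset.univ : Finset (Fin n)).card = n := by
    rw [Finset.card_univ, Fintype.card_fin]
  have e2 : ∑ T ∈ (Finset.univ : Finset (Fin n)).powerset,
        (-1 : ℚ) ^ T.card * ∑ l ∈ A.filter (fun l => ∀ i ∈ T, p < l i), ww n l
      = ∑ k ∈ Finset.range (n + 1), ∑ T ∈ Finset.powersetCard k (Finset.univ : Finset (Fin n)),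
          (-1 : ℚ) ^ T.card * ∑ l ∈ A.filter (fun l => ∀ i ∈ T, p < l i), ww n l := by
    rw [Finset.powerset_card_disjiUnion]
    exact (Finset.sum_disjiUnion _ _ _).trans (by rw [hcardu])
  rw [e2]
  have key : PC p
      (∑ k ∈ Finset.range (n + 1), ∑ T ∈ Finset.powersetCard k (Finset.univ : Finset (Fin n)),
          (-1 : ℚ) ^ T.card * ∑ l ∈ A.filter (fun l => ∀ i ∈ T, p < l i), ww n l)
      (∑ k ∈ Finset.range (n + 1),
          (if k < m then (n.choose k : ℚ) * (-1) ^ k * hsum p n ((m - k) * p) else 0)) := by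
    apply PC_sum hp
    intro k _
    by_cases hkm : k < m
    · rw [if_pos hkm]
      have hconst : (n.choose k : ℚ) * (-1) ^ k * hsum p n ((m - k) * p)
          = ∑ _T ∈ Finset.powersetCard k (Finset.univ : Finset (Fin n)),
              (-1 : ℚ) ^ k * hsum p n ((m - k) * p) := by
        rw [Finset.sum_const, Finset.card_powersetCard, hcardu, nsmul_eq_mul]
        ring
      rw [hconst]
      apply PC_sum hp
      intro T hT
      have hTc : T.card = k := (Finset.mem_powersetCard.mp hT).2
      rw [hTc]
      have := GT_cong (p := p) hp T (by rw [hTc]; exact hkm)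
      rw [hTc] at this
      exact PC_mul hp (PC_refl hp (pint_neg_one_pow hp k)) this
    · rw [if_neg hkm]
      push_neg at hkm
      have hz : ∑ T ∈ Finset.powersetCard k (Finset.univ : Finset (Fin n)),
          (-1 : ℚ) ^ T.card * ∑ l ∈ A.filter (fun l => ∀ i ∈ T, p < l i), ww n l = 0 := by
        apply Finset.sum_eq_zero
        intro T hT
        have hTc : T.card = k := (Finset.mem_powersetCard.mp hT).2
        rw [hA, GT_empty hm T (by omega)]
        simp
      rw [hz]
      exact PC_refl hp (pint_zero hp)
  have e3 : ∑ k ∈ Finset.range (n + 1),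
        (if k < m then (n.choose k : ℚ) * (-1) ^ k * hsum p n ((m - k) * p) else 0)
      = ∑ k ∈ Finset.range m, (n.choose k : ℚ) * (-1) ^ k * hsum p n ((m - k) * p) := by
    rw [← Finset.sum_filter]
    apply Finset.sum_congr _ (fun _ _ => rfl)
    ext x
    simp only [Finset.mem_filter, Finset.mem_range]
    omega
  rw [e3] at key
  obtain ⟨_, _, z, hz, hzp⟩ := key
  exact ⟨z, by rwa [pow_one], hzp⟩
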